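/- Let ξ be a real random variable with E[ξ²] > 0 and E[ξ⁴] ≤ B · (E[ξ²])² for some real B ≥ 1. Then for every t ∈ [0,1], E[|ξ|] ≥ (t(1 − t²)² / B) · √(E[ξ²]). -/

import Mathlib

open MeasureTheory
open ENNReal

/-- Cauchy–Schwarz for integrals of nonnegative functions. -/
lemma integral_sq_le_cs {Ω : Type*} [MeasurableSpace Ω] {μ : Measure Ω}
    {f g : Ω → ℝ} (hf0 : ∀ x, 0 ≤ f x) (hg0 : ∀ x, 0 ≤ g x)
    (hf : MemLp f 2 μ) (hg : MemLp g 2 μ) :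
    (∫ x, f x * g x ∂μ) ^ 2 ≤ (∫ x, f x ^ 2 ∂μ) * (∫ x, g x ^ 2 ∂μ) := by
  have hpq : Real.HolderConjugate 2 2 := ⟨by norm_num, by norm_num, by norm_num⟩
  have h2 : ENNReal.ofReal (2:ℝ) = 2 := by norm_num
  have h := integral_mul_le_Lp_mul_Lq_of_nonneg hpq
    (Filter.Eventually.of_forall hf0) (Filter.Eventually.of_forall hg0)
    (by rwa [h2]) (by rwa [h2])
  have hf2 : ∫ x, f x ^ (2:ℝ) ∂μ = ∫ x, f x ^ 2 ∂μ := by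
    refine integral_congr_ae (Filter.Eventually.of_forall fun x => ?_)
    simp only [← Real.rpow_natCast]; norm_num
  have hg2 : ∫ x, g x ^ (2:ℝ) ∂μ = ∫ x, g x ^ 2 ∂μ := by
    refine integral_congr_ae (Filter.Eventually.of_forall fun x => ?_)
    simp only [← Real.rpow_natCast]; norm_num
  rw [hf2, hg2] at h
  have hA : 0 ≤ ∫ x, f x ^ 2 ∂μ := integral_nonneg fun x => sq_nonneg _
  have hB : 0 ≤ ∫ x, g x ^ 2 ∂μ := integral_nonneg fun x => sq_nonneg _
  have h0 : 0 ≤ ∫ x, f x * g x ∂μ :=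
    integral_nonneg fun x => mul_nonneg (hf0 x) (hg0 x)
  calc (∫ x, f x * g x ∂μ) ^ 2
      ≤ ((∫ x, f x ^ 2 ∂μ) ^ ((1:ℝ)/2) * (∫ x, g x ^ 2 ∂μ) ^ ((1:ℝ)/2)) ^ 2 :=
        pow_le_pow_left₀ h0 h 2
    _ = (∫ x, f x ^ 2 ∂μ) * (∫ x, g x ^ 2 ∂μ) := by
        rw [mul_pow, ← Real.rpow_natCast (_ ^ ((1:ℝ)/2)) 2, ← Real.rpow_natCast (_ ^ ((1:ℝ)/2)) 2,
          ← Real.rpow_mul hA, ← Real.rpow_mul hB]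
        norm_num


/-- **First-moment lower bound from the second-moment method.**
If a real random variable ξ has `E[ξ²] > 0` and is `B`-reasonable, i.e.
`E[ξ⁴] ≤ B (E[ξ²])²` with `B ≥ 1`, then for every `t ∈ [0,1]` we have
`E[|ξ|] ≥ (t (1 − t²)² / B) √(E[ξ²])`. -/
theorem first_moment_lower_bound
    {Ω : Type*} [MeasurableSpace Ω] (μ : Measure Ω) [IsProbabilityMeasure μ]
    (ξ : Ω → ℝ) (hmeas : Measurable ξ) (hL4 : MemLp ξ 4 μ)
    (B : ℝ) (hB : 1 ≤ B)
    (hpos : 0 < ∫ ω, (ξ ω) ^ 2 ∂μ)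
    (hreasonable : ∫ ω, (ξ ω) ^ 4 ∂μ ≤ B * (∫ ω, (ξ ω) ^ 2 ∂μ) ^ 2) :
    ∀ t ∈ Set.Icc (0 : ℝ) 1,
      t * (1 - t ^ 2) ^ 2 / B * Real.sqrt (∫ ω, (ξ ω) ^ 2 ∂μ)
        ≤ ∫ ω, |ξ ω| ∂μ := by
  -- MemLp facts
  have mem_sqrt : MemLp (fun x => Real.sqrt |ξ x|) 2 μ := by
    have h1 : MemLp ξ 1 μ := hL4.mono_exponent (by norm_num)
    have h := (memLp_norm_rpow_iff (q := (2:ℝ≥0∞)⁻¹) (p := (1:ℝ≥0∞))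
      hL4.aestronglyMeasurable (by simp) (by simp)).2 h1
    have e : (1 : ℝ≥0∞) / 2⁻¹ = 2 := by simp
    rw [e] at h
    refine MemLp.ae_eq (Filter.Eventually.of_forall fun x => ?_) h
    simp [Real.sqrt_eq_rpow, Real.norm_eq_abs]
  have mem_sqrt3 : MemLp (fun x => Real.sqrt (|ξ x| ^ 3)) 2 μ := by
    have h3 : MemLp ξ 3 μ := hL4.mono_exponent (by norm_num)
    have hq0 : ((3:ℝ≥0∞)/2) ≠ 0 := by simp
    have hqt : ((3:ℝ≥0∞)/2) ≠ ⊤ := (ENNReal.div_lt_top (by simp) (by simp)).ne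
    have h := (memLp_norm_rpow_iff (q := (3:ℝ≥0∞)/2) (p := (3:ℝ≥0∞))
      hL4.aestronglyMeasurable hq0 hqt).2 h3
    have e : (3 : ℝ≥0∞) / (3/2) = 2 := by
      rw [eq_comm, ENNReal.eq_div_iff hq0 hqt, ENNReal.div_mul_cancel (by simp) (by simp)]
    rw [e] at h
    have et : ((3:ℝ≥0∞)/2).toReal = 3/2 := by
      rw [ENNReal.toReal_div]; norm_num
    rw [et] at h
    refine MemLp.ae_eq (Filter.Eventually.of_forall fun x => ?_) h
    show ‖ξ x‖ ^ ((3:ℝ)/2) = Real.sqrt (|ξ x| ^ 3)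
    rw [Real.norm_eq_abs, Real.sqrt_eq_rpow, ← Real.rpow_natCast |ξ x| 3,
      ← Real.rpow_mul (abs_nonneg _)]
    norm_num
  have mem_sq : MemLp (fun x => (ξ x) ^ 2) 2 μ := by
    have h := (memLp_norm_rpow_iff (q := (2:ℝ≥0∞)) (p := (4:ℝ≥0∞))
      hL4.aestronglyMeasurable (by norm_num) (by norm_num)).2 hL4
    have e : (4 : ℝ≥0∞) / 2 = 2 := by
      rw [eq_comm, ENNReal.eq_div_iff (by simp) (by simp)]; norm_num
    rw [e] at h
    refine MemLp.ae_eq (Filter.Eventually.of_forall fun x => ?_) h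
    show ‖ξ x‖ ^ ((2:ℝ≥0∞)).toReal = ξ x ^ 2
    rw [Real.norm_eq_abs]
    have h2 : ((2:ℝ≥0∞)).toReal = ((2:ℕ):ℝ) := by norm_num
    rw [h2, Real.rpow_natCast, sq_abs]
  have mem_abs : MemLp (fun x => |ξ x|) 2 μ :=
    (hL4.mono_exponent (by norm_num)).abs
  -- notation
  set I1 := ∫ ω, |ξ ω| ∂μ with hI1def
  set I2 := ∫ ω, (ξ ω) ^ 2 ∂μ with hI2def
  set I3 := ∫ ω, |ξ ω| ^ 3 ∂μ with hI3def
  set I4 := ∫ ω, (ξ ω) ^ 4 ∂μ with hI4def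
  -- first Cauchy–Schwarz: I2² ≤ I1 * I3
  have h1 : I2 ^ 2 ≤ I1 * I3 := by
    have h := integral_sq_le_cs (μ := μ)
      (f := fun x => Real.sqrt |ξ x|) (g := fun x => Real.sqrt (|ξ x| ^ 3))
      (fun x => Real.sqrt_nonneg _) (fun x => Real.sqrt_nonneg _) mem_sqrt mem_sqrt3
    have e1 : ∫ x, Real.sqrt |ξ x| * Real.sqrt (|ξ x| ^ 3) ∂μ = I2 := by
      refine integral_congr_ae (Filter.Eventually.of_forall fun x => ?_)
      show Real.sqrt |ξ x| * Real.sqrt (|ξ x| ^ 3) = ξ x ^ 2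
      rw [← Real.sqrt_mul (abs_nonneg _),
        show |ξ x| * |ξ x| ^ 3 = (ξ x ^ 2) ^ 2 by
          rw [← pow_succ', ← abs_pow, abs_of_nonneg (by positivity : (0:ℝ) ≤ ξ x ^ 4)]; ring]
      exact Real.sqrt_sq (sq_nonneg _)
    have e2 : ∫ x, Real.sqrt |ξ x| ^ 2 ∂μ = I1 := by
      refine integral_congr_ae (Filter.Eventually.of_forall fun x => ?_)
      exact Real.sq_sqrt (abs_nonneg _)
    have e3 : ∫ x, Real.sqrt (|ξ x| ^ 3) ^ 2 ∂μ = I3 := by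
      refine integral_congr_ae (Filter.Eventually.of_forall fun x => ?_)
      exact Real.sq_sqrt (by positivity)
    rwa [e1, e2, e3] at h
  -- second Cauchy–Schwarz: I3² ≤ I2 * I4
  have h2 : I3 ^ 2 ≤ I2 * I4 := by
    have h := integral_sq_le_cs (μ := μ)
      (f := fun x => |ξ x|) (g := fun x => (ξ x) ^ 2)
      (fun x => abs_nonneg _) (fun x => sq_nonneg _) mem_abs mem_sq
    have e1 : ∫ x, |ξ x| * ξ x ^ 2 ∂μ = I3 := by
      refine integral_congr_ae (Filter.Eventually.of_forall fun x => ?_)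
      show |ξ x| * ξ x ^ 2 = |ξ x| ^ 3
      rw [← sq_abs, ← pow_succ']
    have e2 : ∫ x, |ξ x| ^ 2 ∂μ = I2 := by
      refine integral_congr_ae (Filter.Eventually.of_forall fun x => ?_)
      exact sq_abs _
    have e3 : ∫ x, (ξ x ^ 2) ^ 2 ∂μ = I4 := by
      refine integral_congr_ae (Filter.Eventually.of_forall fun x => ?_)
      ring
    rwa [e1, e2, e3] at h
  have hI1 : 0 ≤ I1 := integral_nonneg fun x => abs_nonneg _
  have hI3 : 0 ≤ I3 := integral_nonneg fun x => by positivity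
  -- key bound: I2 ≤ B * I1²
  have key : I2 ≤ B * I1 ^ 2 := by
    have k1 : I2 ^ 4 ≤ (I1 * I3) ^ 2 := by
      calc I2 ^ 4 = (I2 ^ 2) ^ 2 := by ring
        _ ≤ (I1 * I3) ^ 2 := pow_le_pow_left₀ (sq_nonneg _) h1 2
    have k2 : (I1 * I3) ^ 2 ≤ I1 ^ 2 * (I2 * I4) := by
      have := mul_le_mul_of_nonneg_left h2 (sq_nonneg I1)
      calc (I1 * I3) ^ 2 = I1 ^ 2 * I3 ^ 2 := by ring
        _ ≤ I1 ^ 2 * (I2 * I4) := this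
    have k3 : I2 * I4 ≤ I2 * (B * I2 ^ 2) :=
      mul_le_mul_of_nonneg_left hreasonable hpos.le
    have k4 : I2 ^ 4 ≤ B * I1 ^ 2 * I2 ^ 3 := by nlinarith [sq_nonneg I1]
    have hc : (0:ℝ) < I2 ^ 3 := by positivity
    have : I2 * I2 ^ 3 ≤ (B * I1 ^ 2) * I2 ^ 3 := by nlinarith
    exact le_of_mul_le_mul_right this hc
  -- conclude
  intro t ht
  obtain ⟨ht0, ht1⟩ := ht
  have hBpos : (0:ℝ) < B := lt_of_lt_of_le one_pos hB
  set s := Real.sqrt I2 with hsdef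
  have hs2 : s ^ 2 = I2 := Real.sq_sqrt hpos.le
  have hs0 : 0 ≤ s := Real.sqrt_nonneg _
  have hc0 : 0 ≤ t * (1 - t ^ 2) ^ 2 := mul_nonneg ht0 (sq_nonneg _)
  have htt : t ^ 2 ≤ 1 := by nlinarith
  have h0t : 0 ≤ 1 - t ^ 2 := by linarith
  have h1t : 1 - t ^ 2 ≤ 1 := by nlinarith [sq_nonneg t]
  have hq : (1 - t ^ 2) ^ 2 ≤ 1 := by
    nlinarith [mul_le_mul_of_nonneg_left h1t h0t]
  have hc1 : t * (1 - t ^ 2) ^ 2 ≤ 1 := by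
    calc t * (1 - t ^ 2) ^ 2 ≤ 1 * 1 := mul_le_mul ht1 hq (sq_nonneg _) zero_le_one
      _ = 1 := by ring
  rw [div_mul_eq_mul_div, div_le_iff₀ hBpos]
  have ha : 0 ≤ t * (1 - t ^ 2) ^ 2 * s := mul_nonneg hc0 hs0
  have hb : 0 ≤ I1 * B := mul_nonneg hI1 hBpos.le
  have hsq : (t * (1 - t ^ 2) ^ 2 * s) ^ 2 ≤ (I1 * B) ^ 2 := by
    have hcsq : (t * (1 - t ^ 2) ^ 2) ^ 2 ≤ 1 := by
      nlinarith [mul_le_mul_of_nonneg_left hc1 hc0]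
    have hBB : B ≤ B ^ 2 := by nlinarith
    calc (t * (1 - t ^ 2) ^ 2 * s) ^ 2 = (t * (1 - t ^ 2) ^ 2) ^ 2 * s ^ 2 := by ring
      _ ≤ 1 * s ^ 2 := mul_le_mul_of_nonneg_right hcsq (sq_nonneg s)
      _ = I2 := by rw [one_mul, hs2]
      _ ≤ B * I1 ^ 2 := key
      _ ≤ B ^ 2 * I1 ^ 2 := mul_le_mul_of_nonneg_right hBB (sq_nonneg I1)
      _ = (I1 * B) ^ 2 := by ring
  exact le_of_pow_le_pow_left₀ two_ne_zero hb hsq
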